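/- (Lemma 1, closed-form solution) Under the stated setup and the conditional-moment restriction, if the heteroscedasticity denominator D := E[R_W·(R_A² − E[R_A² | 𝒢])] is nonzero, then β₀ = E[ R_W·(R_A·R_T − E[R_A·R_T | 𝒢]) ] / D. -/

import Mathlib

open MeasureTheory

private lemma memℒp_two_condexp {α : Type*} {m m0 : MeasurableSpace α} {μ : Measure α}
    [IsFiniteMeasure μ] (hm : m ≤ m0) {f : α → ℝ} (hf : MemLp f 2 μ) :
    MemLp (μ[f|m]) 2 μ := by
  haveI : SigmaFinite (μ.trim hm) := by
    haveI : IsFiniteMeasure (μ.trim hm) := isFiniteMeasure_trim hm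
    infer_instance
  have hg_mem : MemLp ((condExpL2 ℝ ℝ hm (hf.toLp f) : α →₂[μ] ℝ) : α → ℝ) 2 μ := Lp.memLp _
  refine hg_mem.ae_eq (ae_eq_condExp_of_forall_setIntegral_eq hm (hf.integrable one_le_two)
    (fun s _ _ => (hg_mem.integrable one_le_two).integrableOn)
    (fun s hs hμs => ?_) (aestronglyMeasurable_condExpL2 hm _))
  rw [integral_condExpL2_eq hm (hf.toLp f) hs hμs.ne]
  exact setIntegral_congr_ae (hm s hs) ((hf.coeFn_toLp).mono fun x hx _ => hx)

private lemma integrable_mul_of_memℒp_two {α : Type*} {m0 : MeasurableSpace α} {μ : Measure α}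
    {f g : α → ℝ} (hf : MemLp f 2 μ) (hg : MemLp g 2 μ) :
    Integrable (fun x => f x * g x) μ := by
  refine ((hf.integrable_sq.add hg.integrable_sq).div_const 2).mono'
    (hf.aestronglyMeasurable.mul hg.aestronglyMeasurable) ?_
  filter_upwards with x
  simp only [Pi.add_apply]
  rw [Real.norm_eq_abs, abs_mul]
  nlinarith [sq_nonneg (|f x| - |g x|), sq_abs (f x), sq_abs (g x), abs_nonneg (f x),
    abs_nonneg (g x)]

/-- **Lemma 1 (closed-form solution).** Under the setup and the conditional-moment
restriction, if the heteroscedasticity denominator `D = E[R_W (R_A² − E[R_A² | 𝒢])]`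
is nonzero, then `β₀ = E[R_W (R_A R_T − E[R_A R_T | 𝒢])] / D`. -/
theorem influence_function_closed_form
    {Ω : Type*} {m0 : MeasurableSpace Ω} (P : Measure Ω) [IsProbabilityMeasure P]
    (𝒢 ℋ : MeasurableSpace Ω) (h𝒢ℋ : 𝒢 ≤ ℋ) (hℋm0 : ℋ ≤ m0)
    (A T W : Ω → ℝ) (hA4 : MemLp A 4 P) (hT4 : MemLp T 4 P)
    (CW : ℝ) (hWbd : ∀ ω, |W ω| ≤ CW) (hWmeas : Measurable[ℋ] W)
    (RW RA RT : Ω → ℝ)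
    (hRW : RW = fun ω => W ω - (P[W|𝒢]) ω)
    (hRA : RA = fun ω => A ω - (P[A|ℋ]) ω)
    (hRT : RT = fun ω => T ω - (P[T|ℋ]) ω)
    (g : ℝ → Ω → ℝ)
    (hg : ∀ β, g β = fun ω =>
      RW ω * (RA ω * RT ω - β * RA ω ^ 2
        - (P[fun ω' => RA ω' * RT ω' - β * RA ω' ^ 2|𝒢]) ω))
    (β₀ : ℝ)
    (hCMR : P[fun ω => RA ω * (T ω - β₀ * A ω)|ℋ]
      =ᵐ[P] P[fun ω => RA ω * (T ω - β₀ * A ω)|𝒢])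
    (D : ℝ)
    (hDdef : D = ∫ ω, RW ω * (RA ω ^ 2 - (P[fun ω' => RA ω' ^ 2|𝒢]) ω) ∂P)
    (hD : D ≠ 0) :
    β₀ = (∫ ω, RW ω * (RA ω * RT ω - (P[fun ω' => RA ω' * RT ω'|𝒢]) ω) ∂P) / D := by
  have h𝒢m0 : 𝒢 ≤ m0 := h𝒢ℋ.trans hℋm0
  haveI : SigmaFinite (P.trim hℋm0) := by
    haveI : IsFiniteMeasure (P.trim hℋm0) := isFiniteMeasure_trim hℋm0
    infer_instance
  haveI : SigmaFinite (P.trim h𝒢m0) := by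
    haveI : IsFiniteMeasure (P.trim h𝒢m0) := isFiniteMeasure_trim h𝒢m0
    infer_instance
  have two_le_four : (2 : ENNReal) ≤ 4 := by norm_num
  have hA2 : MemLp A 2 P := hA4.mono_exponent two_le_four
  have hT2 : MemLp T 2 P := hT4.mono_exponent two_le_four
  have hRA2 : MemLp RA 2 P := by
    rw [hRA]; exact hA2.sub (memℒp_two_condexp hℋm0 hA2)
  have hRT2 : MemLp RT 2 P := by
    rw [hRT]; exact hT2.sub (memℒp_two_condexp hℋm0 hT2)
  -- RW : ℋ-strongly measurable and a.e. bounded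
  have hRWsm : StronglyMeasurable[ℋ] RW := by
    rw [hRW]
    exact hWmeas.stronglyMeasurable.sub (stronglyMeasurable_condExp.mono h𝒢ℋ)
  set c : ℝ := 2 * max CW 0 with hc
  have hWb' : ∀ᵐ ω ∂P, |W ω| ≤ (CW.toNNReal : ℝ) := by
    filter_upwards with ω
    exact (hWbd ω).trans (by simp [Real.coe_toNNReal', le_max_left])
  have hcond : ∀ᵐ ω ∂P, |(P[W|𝒢]) ω| ≤ (CW.toNNReal : ℝ) := ae_bdd_condExp_of_ae_bdd hWb'
  have hRWbd : ∀ᵐ ω ∂P, ‖RW ω‖ ≤ c := by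
    filter_upwards [hcond] with ω hω
    rw [hRW]
    simp only [Real.norm_eq_abs]
    have h1 : |W ω| ≤ max CW 0 := (hWbd ω).trans (le_max_left _ _)
    have h2 : |(P[W|𝒢]) ω| ≤ max CW 0 := by
      refine hω.trans ?_
      simp [Real.coe_toNNReal']
    have h3 : |W ω - (P[W|𝒢]) ω| ≤ |W ω| + |(P[W|𝒢]) ω| := by
      rw [sub_eq_add_neg]
      refine (abs_add_le _ _).trans ?_
      rw [abs_neg]
    rw [hc]; linarith
  have hRWmul : ∀ {X : Ω → ℝ}, Integrable X P → Integrable (fun ω => RW ω * X ω) P :=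
    fun hX => hX.bdd_mul ((hRWsm.mono hℋm0).aestronglyMeasurable) hRWbd
  -- integrability of products
  have hST : Integrable (fun ω => RA ω * RT ω) P := integrable_mul_of_memℒp_two hRA2 hRT2
  have hSQ : Integrable (fun ω => RA ω ^ 2) P := hRA2.integrable_sq
  set S : Ω → ℝ := fun ω => RA ω * RT ω - β₀ * RA ω ^ 2 with hSdef
  have hS_int : Integrable S P := hST.sub (hSQ.const_mul β₀)
  set U : Ω → ℝ := fun ω => RA ω * (T ω - β₀ * A ω) with hUdef
  have hV2 : MemLp (fun ω => T ω - β₀ * A ω) 2 P := hT2.sub (hA2.const_mul β₀)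
  have hU_int : Integrable U P := integrable_mul_of_memℒp_two hRA2 hV2
  set H : Ω → ℝ := P[fun ω => T ω - β₀ * A ω|ℋ] with hHdef
  have hH2 : MemLp H 2 P := memℒp_two_condexp hℋm0 hV2
  -- E[RA | ℋ] = 0
  have hRA0 : P[RA|ℋ] =ᵐ[P] 0 := by
    rw [hRA]
    have h1 : P[A - P[A|ℋ]|ℋ] =ᵐ[P] P[A|ℋ] - P[P[A|ℋ]|ℋ] :=
      condExp_sub (hA2.integrable one_le_two) integrable_condExp ℋ
    refine h1.trans ?_
    rw [condExp_of_stronglyMeasurable hℋm0 stronglyMeasurable_condExp integrable_condExp]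
    filter_upwards with ω
    simp
  -- H = E[T|ℋ] − β₀ E[A|ℋ] a.e.
  have hH_eq : H =ᵐ[P] fun ω => (P[T|ℋ]) ω - β₀ * (P[A|ℋ]) ω := by
    have h1 : P[(fun ω => T ω) - fun ω => β₀ * A ω|ℋ]
        =ᵐ[P] P[T|ℋ] - P[fun ω => β₀ * A ω|ℋ] :=
      condExp_sub (hT2.integrable one_le_two) ((hA2.integrable one_le_two).const_mul β₀) ℋ
    have h2 : P[fun ω => β₀ * A ω|ℋ] =ᵐ[P] β₀ • P[A|ℋ] := condExp_smul β₀ A ℋ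
    have h1' : H =ᵐ[P] P[T|ℋ] - P[fun ω => β₀ * A ω|ℋ] := h1
    filter_upwards [h1', h2] with ω e1 e2
    rw [e1, Pi.sub_apply, e2, Pi.smul_apply, smul_eq_mul]
  -- S = U − H·RA a.e.
  have hS_eq : S =ᵐ[P] fun ω => U ω - H ω * RA ω := by
    filter_upwards [hH_eq] with ω hω
    have h1 : RT ω = T ω - (P[T|ℋ]) ω := by rw [hRT]
    have h2 : RA ω = A ω - (P[A|ℋ]) ω := by rw [hRA]
    simp only [hSdef, hUdef]
    rw [hω, h1, h2]
    ring
  -- E[H·RA|ℋ] = 0 a.e.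
  have hRAH_int : Integrable (fun ω => H ω * RA ω) P := integrable_mul_of_memℒp_two hH2 hRA2
  have hHsm : AEStronglyMeasurable[ℋ] H P :=
    stronglyMeasurable_condExp.aestronglyMeasurable
  have hpull : P[fun ω => H ω * RA ω|ℋ] =ᵐ[P] H * P[RA|ℋ] :=
    condExp_mul_of_aestronglyMeasurable_left hHsm hRAH_int (hRA2.integrable one_le_two)
  have hRAH0 : P[fun ω => H ω * RA ω|ℋ] =ᵐ[P] 0 := by
    refine hpull.trans ?_
    filter_upwards [hRA0] with ω hω
    simp only [Pi.mul_apply, hω, Pi.zero_apply, mul_zero]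
  -- E[S|ℋ] = E[U|ℋ] a.e.
  have hSℋ : P[S|ℋ] =ᵐ[P] P[U|ℋ] := by
    have ha : P[S|ℋ] =ᵐ[P] P[U - fun ω => H ω * RA ω|ℋ] := by
      refine condExp_congr_ae ?_
      filter_upwards [hS_eq] with ω e
      simpa using e
    have hb : P[U - fun ω => H ω * RA ω|ℋ]
        =ᵐ[P] P[U|ℋ] - P[fun ω => H ω * RA ω|ℋ] := condExp_sub hU_int hRAH_int ℋ
    refine ha.trans (hb.trans ?_)
    filter_upwards [hRAH0] with ω e
    simp [e]
  -- E[S|𝒢] = E[U|𝒢] a.e.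
  have hS𝒢 : P[S|𝒢] =ᵐ[P] P[U|𝒢] := by
    have ht : P[S|𝒢] =ᵐ[P] P[P[S|ℋ]|𝒢] := (condExp_condExp_of_le h𝒢ℋ hℋm0).symm
    have hmid : P[P[S|ℋ]|𝒢] =ᵐ[P] P[P[U|𝒢]|𝒢] := condExp_congr_ae (hSℋ.trans hCMR)
    refine ht.trans (hmid.trans ?_)
    rw [condExp_of_stronglyMeasurable h𝒢m0 stronglyMeasurable_condExp integrable_condExp]
  -- E[S − E[S|𝒢] | ℋ] = 0 a.e.
  have h4 : P[P[S|𝒢]|ℋ] = P[S|𝒢] :=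
    condExp_of_stronglyMeasurable hℋm0 (stronglyMeasurable_condExp.mono h𝒢ℋ)
      integrable_condExp
  have hf_int : Integrable (fun ω => S ω - (P[S|𝒢]) ω) P := hS_int.sub integrable_condExp
  have hf0 : P[fun ω => S ω - (P[S|𝒢]) ω|ℋ] =ᵐ[P] 0 := by
    have h3 : P[fun ω => S ω - (P[S|𝒢]) ω|ℋ] =ᵐ[P] P[S|ℋ] - P[P[S|𝒢]|ℋ] :=
      condExp_sub hS_int integrable_condExp ℋ
    refine h3.trans ?_
    rw [h4]
    filter_upwards [hSℋ, hS𝒢, hCMR] with ω e1 e2 e3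
    simp only [Pi.sub_apply, Pi.zero_apply, e1, e2, e3, sub_self]
  -- ∫ RW (S − E[S|𝒢]) = 0
  have hRWf_int : Integrable (fun ω => RW ω * (S ω - (P[S|𝒢]) ω)) P := hRWmul hf_int
  have hzero : ∫ ω, RW ω * (S ω - (P[S|𝒢]) ω) ∂P = 0 := by
    have hpull2 : P[fun ω => RW ω * (S ω - (P[S|𝒢]) ω)|ℋ]
        =ᵐ[P] RW * P[fun ω => S ω - (P[S|𝒢]) ω|ℋ] :=
      condExp_stronglyMeasurable_mul_of_bound hℋm0 hRWsm hf_int c hRWbd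
    have hconde0 : P[fun ω => RW ω * (S ω - (P[S|𝒢]) ω)|ℋ] =ᵐ[P] 0 := by
      refine hpull2.trans ?_
      filter_upwards [hf0] with ω e
      simp [Pi.mul_apply, e]
    calc ∫ ω, RW ω * (S ω - (P[S|𝒢]) ω) ∂P
        = ∫ ω, (P[fun ω => RW ω * (S ω - (P[S|𝒢]) ω)|ℋ]) ω ∂P :=
          (integral_condExp hℋm0).symm
      _ = 0 := by
          rw [integral_congr_ae hconde0]
          simp
  -- linearity
  have hc1 : Integrable (fun ω => RW ω * (RA ω * RT ω
      - (P[fun ω' => RA ω' * RT ω'|𝒢]) ω)) P := hRWmul (hST.sub integrable_condExp)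
  have hc2 : Integrable (fun ω => RW ω * (RA ω ^ 2
      - (P[fun ω' => RA ω' ^ 2|𝒢]) ω)) P := hRWmul (hSQ.sub integrable_condExp)
  have hPS : P[S|𝒢] =ᵐ[P] fun ω => (P[fun ω' => RA ω' * RT ω'|𝒢]) ω
      - β₀ * (P[fun ω' => RA ω' ^ 2|𝒢]) ω := by
    have ha : P[S|𝒢] =ᵐ[P] P[fun ω => RA ω * RT ω|𝒢] - P[fun ω => β₀ * RA ω ^ 2|𝒢] :=
      condExp_sub hST (hSQ.const_mul β₀) 𝒢
    have hb : P[fun ω => β₀ * RA ω ^ 2|𝒢] =ᵐ[P] β₀ • P[fun ω => RA ω ^ 2|𝒢] :=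
      condExp_smul β₀ _ 𝒢
    filter_upwards [ha, hb] with ω e1 e2
    rw [e1, Pi.sub_apply, e2, Pi.smul_apply, smul_eq_mul]
  have hsplit : ∫ ω, RW ω * (S ω - (P[S|𝒢]) ω) ∂P
      = (∫ ω, RW ω * (RA ω * RT ω - (P[fun ω' => RA ω' * RT ω'|𝒢]) ω) ∂P)
        - β₀ * ∫ ω, RW ω * (RA ω ^ 2 - (P[fun ω' => RA ω' ^ 2|𝒢]) ω) ∂P := by
    rw [← integral_const_mul, ← integral_sub hc1 (hc2.const_mul β₀)]
    refine integral_congr_ae ?_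
    filter_upwards [hPS] with ω e
    rw [e]
    simp only [hSdef]
    ring
  have hkey : (∫ ω, RW ω * (RA ω * RT ω - (P[fun ω' => RA ω' * RT ω'|𝒢]) ω) ∂P)
      = β₀ * D := by
    rw [hDdef]
    rw [hzero] at hsplit
    linarith
  rw [hkey]
  field_simp
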